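/- For all n ≥ 1, s(n) ≥ 1; in particular s(n) > 0 for all n. -/
import Mathlib

def rs : ℕ → ℤ
  | 0 => 1
  | (n+1) =>
    if (n+1) % 2 = 0 then rs ((n+1)/2)
    else (-1)^((n+1)/2) * rs ((n+1)/2)
decreasing_by all_goals exact Nat.div_lt_self (Nat.succ_pos n) (by norm_num)

def s (n : ℕ) : ℤ := ∑ i ∈ Finset.range (n+1), rs i

def t (n : ℕ) : ℤ := ∑ i ∈ Finset.range (n+1), (-1)^i * rs i

lemma rs_zero : rs 0 = 1 := by rw [rs]

lemma rs_even (m : ℕ) : rs (2*m) = rs m := by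
  cases m with
  | zero => rfl
  | succ k =>
    rw [show 2*(k+1) = (2*k+1)+1 by ring, rs]
    have h1 : (2*k+1+1) % 2 = 0 := by omega
    have h2 : (2*k+1+1) / 2 = k+1 := by omega
    simp [h1, h2]

lemma rs_odd (m : ℕ) : rs (2*m+1) = (-1)^m * rs m := by
  rw [show 2*m+1 = (2*m)+1 by ring, rs]
  have h1 : (2*m+1) % 2 = 1 := by omega
  have h2 : (2*m+1) / 2 = m := by omega
  simp [h1, h2]

lemma rs_pm : ∀ n, rs n = 1 ∨ rs n = -1 := by
  intro n
  induction n using Nat.strong_induction_on with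
  | _ n ih =>
    match n with
    | 0 => exact Or.inl rs_zero
    | (m+1) =>
      rw [rs]
      have hlt : (m+1)/2 < m+1 := Nat.div_lt_self (Nat.succ_pos m) (by norm_num)
      have hp : (-1:ℤ)^((m+1)/2) = 1 ∨ (-1:ℤ)^((m+1)/2) = -1 := by rcases Nat.even_or_odd ((m+1)/2) with he | ho; exact Or.inl he.neg_one_pow; exact Or.inr ho.neg_one_pow
      rcases ih _ hlt with h | h <;> rcases hp with hp | hp <;>
        by_cases hm : (m+1) % 2 = 0 <;> simp [h, hp, hm]

lemma s_succ (n : ℕ) : s (n+1) = s n + rs (n+1) := by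
  simp [s, Finset.sum_range_succ]

lemma t_succ (n : ℕ) : t (n+1) = t n + (-1)^(n+1) * rs (n+1) := by
  simp [t, Finset.sum_range_succ]

lemma st_odd : ∀ m, s (2*m+1) = s m + t m ∧ t (2*m+1) = s m - t m := by
  intro m
  induction m with
  | zero =>
    have h1 : rs 1 = 1 := by
      have := rs_odd 0; simpa [rs_zero] using this
    constructor <;> simp [s, t, Finset.sum_range_succ, rs_zero, h1]
  | succ k ih =>
    have hp1 : (-1:ℤ)^(2*k+1+1) = 1 := Even.neg_one_pow ⟨k+1, by ring⟩
    have hp2 : (-1:ℤ)^(2*k+2+1) = -1 := Odd.neg_one_pow ⟨k+1, by ring⟩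
    have hs2 : s (2*(k+1)+1) = s (2*k+1) + rs (2*k+2) + rs (2*k+3) := by
      rw [show 2*(k+1)+1 = (2*k+2)+1 by ring, s_succ, show 2*k+2 = (2*k+1)+1 by ring, s_succ]
    have ht2 : t (2*(k+1)+1) = t (2*k+1) + rs (2*k+2) - rs (2*k+3) := by
      rw [show 2*(k+1)+1 = (2*k+2)+1 by ring, t_succ, show 2*k+2 = (2*k+1)+1 by ring, t_succ]
      rw [show (2*k+1)+1+1 = 2*k+2+1 by ring, hp2, show (2*k+1)+1 = 2*k+1+1 by ring, hp1]
      ring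
    have he : rs (2*k+2) = rs (k+1) := by
      have := rs_even (k+1); rwa [show 2*(k+1) = 2*k+2 by ring] at this
    have ho : rs (2*k+3) = (-1)^(k+1) * rs (k+1) := by
      have := rs_odd (k+1); rwa [show 2*(k+1)+1 = 2*k+3 by ring] at this
    rw [hs2, ht2, he, ho, ih.1, ih.2, s_succ, t_succ]
    constructor <;> ring

lemma s_even2 (k : ℕ) : s (2*k+2) = s k + t k + rs (k+1) := by
  have h := s_succ (2*k+1)
  have he : rs (2*k+1+1) = rs (k+1) := by
    have := rs_even (k+1); rwa [show 2*(k+1) = 2*k+1+1 by ring] at this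
  rw [show 2*k+2 = (2*k+1)+1 by ring, h, (st_odd k).1, he]

lemma t_even2 (k : ℕ) : t (2*k+2) = s k - t k + rs (k+1) := by
  have h := t_succ (2*k+1)
  have he : rs (2*k+1+1) = rs (k+1) := by
    have := rs_even (k+1); rwa [show 2*(k+1) = 2*k+1+1 by ring] at this
  have hp : (-1:ℤ)^(2*k+1+1) = 1 := Even.neg_one_pow ⟨k+1, by ring⟩
  rw [show 2*k+2 = (2*k+1)+1 by ring, h, (st_odd k).2, he, hp]
  ring

lemma t_par : ∀ n : ℕ, (t n + n) % 2 = 1 := by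
  intro n
  induction n with
  | zero => simp [t, rs_zero]
  | succ k ih =>
    rcases rs_pm (k+1) with h | h <;>
    rcases Nat.even_or_odd (k+1) with hp | hp <;>
    · rw [t_succ, h]
      first
      | rw [hp.neg_one_pow]
      | rw [Even.neg_one_pow hp]
      | rw [Odd.neg_one_pow hp]
      push_cast
      omega

lemma key : ∀ n : ℕ, 1 ≤ s n ∧ 0 ≤ t n ∧ t n ≤ s n ∧
    (t n = 0 → rs (n+1) = 1) ∧ (s n = t n → rs (n+1) = 1) := by
  intro n
  induction n using Nat.strong_induction_on with
  | _ n ih =>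
    match n with
    | 0 =>
      have h1 : rs 1 = 1 := by have := rs_odd 0; simpa [rs_zero] using this
      refine ⟨?_, ?_, ?_, fun _ => h1, fun _ => h1⟩ <;> simp [s, t, rs_zero]
    | (m+1) =>
      rcases Nat.even_or_odd (m+1) with ⟨k, hk⟩ | ⟨k, hk⟩
      · -- m+1 = 2k, k ≥ 1; write m+1 = 2j+2 with j = k-1
        obtain ⟨j, hj⟩ : ∃ j, m+1 = 2*j+2 := ⟨k-1, by omega⟩
        obtain ⟨hs1, ht0, hts, htr, hsr⟩ := ih j (by omega)
        have hs := s_even2 j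
        have ht := t_even2 j
        rw [hj, hs, ht]
        have hrs : rs (j+1) = 1 ∨ rs (j+1) = -1 := rs_pm (j+1)
        have h1 : 1 ≤ s j + t j + rs (j+1) := by
          rcases hrs with h | h
          · omega
          · have : t j ≠ 0 := fun h0 => by rw [htr h0] at h; omega
            omega
        have h2 : 0 ≤ s j - t j + rs (j+1) := by
          rcases hrs with h | h
          · omega
          · have : s j ≠ t j := fun h0 => by rw [hsr h0] at h; omega
            omega
        refine ⟨h1, h2, by omega, ?_, ?_⟩
        · -- t(2j+2) ≠ 0 by parity
          intro h0
          have := t_par (2*j+2)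
          rw [ht] at this
          push_cast at this
          omega
        · -- s = t → t j = 0 → j odd → rs(2j+3) = 1
          intro h0
          have htj : t j = 0 := by omega
          have hodd : Odd j := by
            have := t_par j
            rcases Nat.even_or_odd j with ⟨l, hl⟩ | ho
            · exfalso; rw [htj, hl] at this; push_cast at this; omega
            · exact ho
          have hr1 : rs (j+1) = 1 := htr htj
          have : rs (2*j+2+1) = (-1)^(j+1) * rs (j+1) := by
            have := rs_odd (j+1); rwa [show 2*(j+1)+1 = 2*j+2+1 by ring] at this
          rw [this, hr1, Even.neg_one_pow hodd.add_one]
          ring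
      · -- m+1 = 2k+1
        obtain ⟨hs1, ht0, hts, htr, hsr⟩ := ih k (by omega)
        have hs := (st_odd k).1
        have ht := (st_odd k).2
        rw [hk, hs, ht]
        have he : rs (2*k+1+1) = rs (k+1) := by
          have := rs_even (k+1); rwa [show 2*(k+1) = 2*k+1+1 by ring] at this
        refine ⟨by omega, by omega, by omega, ?_, ?_⟩
        · intro h0
          rw [he]
          exact hsr (by omega)
        · intro h0
          rw [he]
          exact htr (by omega)

theorem stmt6 : (∀ n : ℕ, 1 ≤ n → 1 ≤ s n) ∧ (∀ n : ℕ, 0 < s n) := by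
  exact ⟨fun n _ => (key n).1, fun n => (key n).1⟩
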